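/- Let u⁺, u⁻ ∈ L²(ℝ³;ℂ) and let Φ = conj(u⁺)·(1, −i) + conj(u⁻)·(1, i) ∈ L²(ℝ³;ℂ²), and let J(f₁,f₂) = (f₂, −f₁). Then: (i) JΦ = iΦ − 2i·(1,−i)·conj(u⁺) and JΦ = −iΦ + 2i·(1,i)·conj(u⁻); (ii) if f ∈ L²(ℝ³;ℂ²) satisfies (σ₁ conj(Φ), f) = 0 and (σ₁ Φ, f) = 0, then (σ₁ conj(Φ), J f) = ( 2i·(i,1)·u⁺ , f ) and (σ₁ Φ, J f) = ( 2i·(i,−1)·conj(u⁺) , f ). -/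

import Mathlib

open MeasureTheory

noncomputable section

/-- The `L²(ℝ³;ℂ)` inner product `(f,g) = ∫ conj(f) g`, conjugate-linear in the first
argument. -/
def ip (f g : EuclideanSpace ℝ (Fin 3) → ℂ) : ℂ :=
  ∫ x, (starRingEnd ℂ) (f x) * g x

/-- The `L²(ℝ³;ℂ²)` inner product, the sum of the componentwise inner products. -/
def ip2 (f g : EuclideanSpace ℝ (Fin 3) → ℂ × ℂ) : ℂ :=
  ∫ x, ((starRingEnd ℂ) (f x).1 * (g x).1 + (starRingEnd ℂ) (f x).2 * (g x).2)

/-- Componentwise complex conjugation. -/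
def conj2 (f : EuclideanSpace ℝ (Fin 3) → ℂ × ℂ) : EuclideanSpace ℝ (Fin 3) → ℂ × ℂ :=
  fun x => ((starRingEnd ℂ) (f x).1, (starRingEnd ℂ) (f x).2)

/-- The Pauli matrix `σ₁`, swapping the two components. -/
def sig1 (f : EuclideanSpace ℝ (Fin 3) → ℂ × ℂ) : EuclideanSpace ℝ (Fin 3) → ℂ × ℂ :=
  fun x => ((f x).2, (f x).1)

/-- The symplectic matrix `J(f₁,f₂) = (f₂,−f₁)`. -/
def Jmat (f : EuclideanSpace ℝ (Fin 3) → ℂ × ℂ) : EuclideanSpace ℝ (Fin 3) → ℂ × ℂ :=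
  fun x => ((f x).2, -(f x).1)

/-- Product of two `L²` functions is integrable (Hölder). -/
lemma l2_mul_integrable {g h : EuclideanSpace ℝ (Fin 3) → ℂ}
    (hg : MemLp g 2 volume) (hh : MemLp h 2 volume) :
    Integrable (fun x => g x * h x) volume := by
  rw [← memLp_one_iff_integrable]
  have hpqr : (1 : ENNReal) / 1 = 1 / 2 + 1 / 2 := by
    rw [ENNReal.div_add_div_same, one_add_one_eq_two,
      ENNReal.div_self two_ne_zero ENNReal.ofNat_ne_top]
    exact ENNReal.div_self one_ne_zero ENNReal.one_ne_top
  have := hh.smul hg (r := 1)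
  exact this

/-- Lemma 2.7: with `Φ = conj(u⁺)(1,−i) + conj(u⁻)(1,i)`:
(i) `JΦ = iΦ − 2i(1,−i)conj(u⁺)` and `JΦ = −iΦ + 2i(1,i)conj(u⁻)`;
(ii) if `(σ₁ conj(Φ), f) = 0 = (σ₁ Φ, f)` then
`(σ₁ conj(Φ), J f) = (2i(i,1)u⁺, f)` and `(σ₁ Φ, J f) = (2i(i,−1)conj(u⁺), f)`. -/
theorem stmt12 (up um : EuclideanSpace ℝ (Fin 3) → ℂ)
    (hup : MemLp up 2 volume) (hum : MemLp um 2 volume)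
    (Φ : EuclideanSpace ℝ (Fin 3) → ℂ × ℂ)
    (hΦ : ∀ x, Φ x = ((starRingEnd ℂ) (up x) + (starRingEnd ℂ) (um x),
      -Complex.I * (starRingEnd ℂ) (up x) + Complex.I * (starRingEnd ℂ) (um x))) :
    (∀ x, Jmat Φ x =
        Complex.I • Φ x
          - (2 * Complex.I) • ((starRingEnd ℂ) (up x), -Complex.I * (starRingEnd ℂ) (up x))) ∧
    (∀ x, Jmat Φ x =
        (-Complex.I) • Φ x
          + (2 * Complex.I) • ((starRingEnd ℂ) (um x), Complex.I * (starRingEnd ℂ) (um x))) ∧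
    (∀ f : EuclideanSpace ℝ (Fin 3) → ℂ × ℂ, MemLp f 2 volume →
      ip2 (sig1 (conj2 Φ)) f = 0 → ip2 (sig1 Φ) f = 0 →
        ip2 (sig1 (conj2 Φ)) (Jmat f) =
          ip2 (fun x => (2 * Complex.I * (Complex.I * up x), 2 * Complex.I * up x)) f ∧
        ip2 (sig1 Φ) (Jmat f) =
          ip2 (fun x => (2 * Complex.I * (Complex.I * (starRingEnd ℂ) (up x)),
            2 * Complex.I * (-(starRingEnd ℂ) (up x)))) f) := by
  refine ⟨?_, ?_, ?_⟩
  · intro x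
    simp only [Jmat, hΦ x, Prod.smul_mk, Prod.mk_sub_mk, Prod.mk_add_mk, smul_eq_mul,
      Prod.mk.injEq]
    constructor <;> (first | ring1 | ((try ring_nf); simp only [Complex.I_sq, Complex.I_mul_I, map_ofNat, map_mul,
        Complex.conj_I, Complex.conj_conj, map_neg]; ring))
  · intro x
    simp only [Jmat, hΦ x, Prod.smul_mk, Prod.mk_sub_mk, Prod.mk_add_mk, smul_eq_mul,
      Prod.mk.injEq]
    constructor <;> (first | ring1 | ((try ring_nf); simp only [Complex.I_sq, Complex.I_mul_I, map_ofNat, map_mul,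
        Complex.conj_I, Complex.conj_conj, map_neg]; ring))
  · intro f hf h1 h2
    have hcup : MemLp (fun x => (starRingEnd ℂ) (up x)) 2 volume :=
      ((Complex.conjCLE : ℂ →L[ℝ] ℂ).comp_memLp' hup)
    have hcum : MemLp (fun x => (starRingEnd ℂ) (um x)) 2 volume :=
      ((Complex.conjCLE : ℂ →L[ℝ] ℂ).comp_memLp' hum)
    have hf1 : MemLp (fun x => (f x).1) 2 volume :=
      ((ContinuousLinearMap.fst ℝ ℂ ℂ).comp_memLp' hf)
    have hf2 : MemLp (fun x => (f x).2) 2 volume :=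
      ((ContinuousLinearMap.snd ℝ ℂ ℂ).comp_memLp' hf)
    have hΦ1 : MemLp (fun x => (Φ x).1) 2 volume := by
      have : (fun x => (Φ x).1) = fun x => (starRingEnd ℂ) (up x) + (starRingEnd ℂ) (um x) :=
        funext fun x => by rw [hΦ x]
      rw [this]; exact hcup.add hcum
    have hΦ2 : MemLp (fun x => (Φ x).2) 2 volume := by
      have : (fun x => (Φ x).2) = fun x => (-Complex.I) * (starRingEnd ℂ) (up x) + Complex.I * (starRingEnd ℂ) (um x) :=
        funext fun x => by rw [hΦ x]
      rw [this]; exact (hcup.const_mul _).add (hcum.const_mul _)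
    have hcΦ1 : MemLp (fun x => (starRingEnd ℂ) ((Φ x).1)) 2 volume :=
      ((Complex.conjCLE : ℂ →L[ℝ] ℂ).comp_memLp' hΦ1)
    have hcΦ2 : MemLp (fun x => (starRingEnd ℂ) ((Φ x).2)) 2 volume :=
      ((Complex.conjCLE : ℂ →L[ℝ] ℂ).comp_memLp' hΦ2)
    -- hypotheses as integrals
    have h1' : ∫ x, ((Φ x).2 * (f x).1 + (Φ x).1 * (f x).2) = 0 := by
      have := h1
      rw [ip2] at this
      simpa [sig1, conj2, Complex.conj_conj] using this
    have h2' : ∫ x, ((starRingEnd ℂ) ((Φ x).2) * (f x).1 + (starRingEnd ℂ) ((Φ x).1) * (f x).2) = 0 := by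
      have := h2
      rw [ip2] at this
      simpa [sig1, Complex.conj_conj] using this
    constructor
    · -- first identity
      have e1 : ip2 (sig1 (conj2 Φ)) (Jmat f)
          = ∫ x, ((Φ x).2 * (f x).2 - (Φ x).1 * (f x).1) := by
        rw [ip2]
        congr 1; funext x
        simp [sig1, conj2, Jmat, Complex.conj_conj]
        first | ring1 | ((try ring_nf); simp only [Complex.I_sq, Complex.I_mul_I, map_ofNat, map_mul,
        Complex.conj_I, Complex.conj_conj, map_neg]; ring)
      have key : ∀ x, (Φ x).2 * (f x).2 - (Φ x).1 * (f x).1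
          = ((starRingEnd ℂ) (2 * Complex.I * (Complex.I * up x)) * (f x).1
              + (starRingEnd ℂ) (2 * Complex.I * up x) * (f x).2)
            + Complex.I * ((Φ x).2 * (f x).1 + (Φ x).1 * (f x).2) := by
        intro x
        rw [hΦ x]
        simp [map_mul, Complex.conj_I]
        first | ring1 | ((try ring_nf); simp only [Complex.I_sq, Complex.I_mul_I, map_ofNat, map_mul,
        Complex.conj_I, Complex.conj_conj, map_neg]; ring)
      have hR : Integrable (fun x => (starRingEnd ℂ) (2 * Complex.I * (Complex.I * up x)) * (f x).1
          + (starRingEnd ℂ) (2 * Complex.I * up x) * (f x).2) volume := by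
        have heq : (fun x => (starRingEnd ℂ) (2 * Complex.I * (Complex.I * up x)) * (f x).1
            + (starRingEnd ℂ) (2 * Complex.I * up x) * (f x).2)
            = fun x => (-2) * ((starRingEnd ℂ) (up x) * (f x).1) + (-(2 * Complex.I)) * ((starRingEnd ℂ) (up x) * (f x).2) := by
          funext x
          simp [map_mul, Complex.conj_I]
          first | ring1 | ((try ring_nf); simp only [Complex.I_sq, Complex.I_mul_I, map_ofNat, map_mul,
        Complex.conj_I, Complex.conj_conj, map_neg]; ring)
        rw [heq]
        exact ((l2_mul_integrable hcup hf1).const_mul _).add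
          ((l2_mul_integrable hcup hf2).const_mul _)
      have hH : Integrable (fun x => (Φ x).2 * (f x).1 + (Φ x).1 * (f x).2) volume :=
        (l2_mul_integrable hΦ2 hf1).add (l2_mul_integrable hΦ1 hf2)
      rw [e1]
      rw [integral_congr_ae (Filter.Eventually.of_forall key)]
      rw [integral_add hR (hH.const_mul _), integral_const_mul, h1', mul_zero, add_zero]
      rw [ip2]
    · -- second identity
      have e1 : ip2 (sig1 Φ) (Jmat f)
          = ∫ x, ((starRingEnd ℂ) ((Φ x).2) * (f x).2 - (starRingEnd ℂ) ((Φ x).1) * (f x).1) := by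
        rw [ip2]
        congr 1; funext x
        simp [sig1, Jmat, Complex.conj_conj]
        first | ring1 | ((try ring_nf); simp only [Complex.I_sq, Complex.I_mul_I, map_ofNat, map_mul,
        Complex.conj_I, Complex.conj_conj, map_neg]; ring)
      have key : ∀ x, (starRingEnd ℂ) ((Φ x).2) * (f x).2 - (starRingEnd ℂ) ((Φ x).1) * (f x).1
          = ((starRingEnd ℂ) (2 * Complex.I * (Complex.I * (starRingEnd ℂ) (up x))) * (f x).1
              + (starRingEnd ℂ) (2 * Complex.I * (-((starRingEnd ℂ) (up x)))) * (f x).2)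
            + (-Complex.I) * ((starRingEnd ℂ) ((Φ x).2) * (f x).1 + (starRingEnd ℂ) ((Φ x).1) * (f x).2) := by
        intro x
        rw [hΦ x]
        simp [map_mul, map_add, Complex.conj_I, Complex.conj_conj]
        first | ring1 | ((try ring_nf); simp only [Complex.I_sq, Complex.I_mul_I, map_ofNat, map_mul,
        Complex.conj_I, Complex.conj_conj, map_neg]; ring)
      have hR : Integrable (fun x => (starRingEnd ℂ) (2 * Complex.I * (Complex.I * (starRingEnd ℂ) (up x))) * (f x).1
          + (starRingEnd ℂ) (2 * Complex.I * (-((starRingEnd ℂ) (up x)))) * (f x).2) volume := by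
        have heq : (fun x => (starRingEnd ℂ) (2 * Complex.I * (Complex.I * (starRingEnd ℂ) (up x))) * (f x).1
            + (starRingEnd ℂ) (2 * Complex.I * (-((starRingEnd ℂ) (up x)))) * (f x).2)
            = fun x => (-2) * (up x * (f x).1) + (2 * Complex.I) * (up x * (f x).2) := by
          funext x
          simp [map_mul, Complex.conj_I, Complex.conj_conj]
          first | ring1 | ((try ring_nf); simp only [Complex.I_sq, Complex.I_mul_I, map_ofNat, map_mul,
        Complex.conj_I, Complex.conj_conj, map_neg]; ring)
        rw [heq]
        exact ((l2_mul_integrable hup hf1).const_mul _).add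
          ((l2_mul_integrable hup hf2).const_mul _)
      have hH : Integrable (fun x => (starRingEnd ℂ) ((Φ x).2) * (f x).1 + (starRingEnd ℂ) ((Φ x).1) * (f x).2) volume :=
        (l2_mul_integrable hcΦ2 hf1).add (l2_mul_integrable hcΦ1 hf2)
      rw [e1]
      rw [integral_congr_ae (Filter.Eventually.of_forall key)]
      rw [integral_add hR (hH.const_mul _), integral_const_mul, h2', mul_zero, add_zero]
      rw [ip2]

end
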